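/- Every nontrivial normal subgroup N of a MIF group G is itself MIF. -/

import Mathlib

/-- `w ∈ G * F_n` is a mixed identity of `G`: every substitution of elements of `G` for the
free generators (via the homomorphism `G * F_n → G` that is the identity on `G`) kills `w`. -/
def SatisfiesMixedIdentity (G : Type*) [Group G] {n : ℕ}
    (w : Monoid.Coprod G (FreeGroup (Fin n))) : Prop :=
  ∀ g : Fin n → G, Monoid.Coprod.lift (MonoidHom.id G) (FreeGroup.lift g) w = 1

/-- A group is mixed identity free (MIF) if it satisfies no nontrivial mixed identity. -/
def IsMIF (G : Type*) [Group G] : Prop :=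
  ∀ (n : ℕ) (w : Monoid.Coprod G (FreeGroup (Fin n))), SatisfiesMixedIdentity G w → w = 1
open Function
namespace MIFAux
section Aux
variable {α β : Type*}
noncomputable def swapFn (f g : β → α) (x : α) : α :=
  @dite _ (∃ b, f b = x) (Classical.propDecidable _) (fun h => g h.choose) fun _ =>
    @dite _ (∃ b, g b = x) (Classical.propDecidable _) (fun h => f h.choose) fun _ => x
variable {f g : β → α}
theorem swapFn_left (hf : Injective f) (b : β) : swapFn f g (f b) = g b := by
  unfold swapFn
  rw [dif_pos ⟨b, rfl⟩]
  exact congrArg g (hf (Exists.choose_spec (⟨b, rfl⟩ : ∃ b', f b' = f b)))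
theorem swapFn_right (hdisj : ∀ b b', f b ≠ g b') (hg : Injective g) (b : β) :
    swapFn f g (g b) = f b := by
  unfold swapFn
  rw [dif_neg (by rintro ⟨b', hb'⟩; exact hdisj b' b hb'), dif_pos ⟨b, rfl⟩]
  exact congrArg f (hg (Exists.choose_spec (⟨b, rfl⟩ : ∃ b', g b' = g b)))
theorem swapFn_fixed {x : α} (h1 : ∀ b, f b ≠ x) (h2 : ∀ b, g b ≠ x) : swapFn f g x = x := by
  unfold swapFn
  rw [dif_neg (by rintro ⟨b, hb⟩; exact h1 b hb), dif_neg (by rintro ⟨b, hb⟩; exact h2 b hb)]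
theorem swapFn_involutive (hf : Injective f) (hg : Injective g)
    (hdisj : ∀ b b', f b ≠ g b') : Involutive (swapFn f g) := by
  intro x
  by_cases h1 : ∃ b, f b = x
  · obtain ⟨b, rfl⟩ := h1
    rw [swapFn_left hf, swapFn_right hdisj hg]
  · by_cases h2 : ∃ b, g b = x
    · obtain ⟨b, rfl⟩ := h2
      rw [swapFn_right hdisj hg, swapFn_left hf]
    · have h1' : ∀ b, f b ≠ x := fun b hb => h1 ⟨b, hb⟩
      have h2' : ∀ b, g b ≠ x := fun b hb => h2 ⟨b, hb⟩
      rw [swapFn_fixed h1' h2', swapFn_fixed h1' h2']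
noncomputable def swapPerm (hf : Injective f) (hg : Injective g)
    (hdisj : ∀ b b', f b ≠ g b') : Equiv.Perm α :=
  (swapFn_involutive hf hg hdisj).toPerm _
theorem swapPerm_left (hf : Injective f) (hg : Injective g)
    (hdisj : ∀ b b', f b ≠ g b') (b : β) : swapPerm hf hg hdisj (f b) = g b :=
  swapFn_left hf b
theorem swapPerm_right (hf : Injective f) (hg : Injective g)
    (hdisj : ∀ b b', f b ≠ g b') (b : β) : swapPerm hf hg hdisj (g b) = f b :=
  swapFn_right hdisj hg b
theorem swapPerm_fixed (hf : Injective f) (hg : Injective g)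
    (hdisj : ∀ b b', f b ≠ g b') {x : α} (h1 : ∀ b, f b ≠ x) (h2 : ∀ b, g b ≠ x) :
    swapPerm hf hg hdisj x = x :=
  swapFn_fixed h1 h2
theorem swapPerm_inv (hf : Injective f) (hg : Injective g)
    (hdisj : ∀ b b', f b ≠ g b') : (swapPerm hf hg hdisj)⁻¹ = swapPerm hf hg hdisj := by
  rw [Equiv.Perm.inv_def]
  exact Involutive.toPerm_symm _
end Aux

section Main

variable {G : Type*} [Group G] (N : Subgroup G) (n : ℕ)

abbrev Src : Type _ := Monoid.Coprod (↥N) (FreeGroup (Fin n))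

instance srcSetoid : Setoid (G × Src N n) where
  r p q := ∃ m : ↥N, q.1 = p.1 * m ∧ q.2 = (Monoid.Coprod.inl m)⁻¹ * p.2
  iseqv := by
    constructor
    · intro p; exact ⟨1, by simp⟩
    · rintro p q ⟨m, h1, h2⟩
      refine ⟨m⁻¹, ?_, ?_⟩
      · rw [h1]; push_cast; group
      · rw [h2]; simp [mul_assoc]
    · rintro p q r ⟨m1, h1, h2⟩ ⟨m2, h3, h4⟩
      refine ⟨m1 * m2, ?_, ?_⟩
      · rw [h3, h1]; push_cast; group
      · rw [h4, h2]; simp [mul_assoc]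

abbrev APt : Type _ := Quotient (srcSetoid N n)

abbrev Pt : Type _ := (G × Src N n) ⊕ ((G × Src N n) ⊕ APt N n)

def j (x : Src N n) : Pt N n := Sum.inr (Sum.inr ⟦((1 : G), x)⟧)

theorem j_injective : Injective (j N n) := by
  intro x y h
  simp only [j, Sum.inr.injEq] at h
  obtain ⟨m, h1, h2⟩ := Quotient.exact h
  have hm : (m : G) = 1 := by simpa using h1.symm
  have : m = 1 := by exact_mod_cast hm
  subst this
  simpa using h2.symm

def act (g : G) : Pt N n → Pt N n
  | Sum.inl p => Sum.inl (g * p.1, p.2)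
  | Sum.inr (Sum.inl p) => Sum.inr (Sum.inl (g * p.1, p.2))
  | Sum.inr (Sum.inr a) => Sum.inr (Sum.inr (Quotient.map (fun p => (g * p.1, p.2))
      (by rintro p q ⟨m, h1, h2⟩; refine ⟨m, ?_, h2⟩; dsimp only; rw [h1, mul_assoc]) a))

theorem act_one : ∀ x, act N n 1 x = x := by
  rintro (p | p | a)
  · simp [act]
  · simp [act]
  · induction a using Quotient.inductionOn with
    | h p => simp [act]

theorem act_mul (g h : G) : ∀ x, act N n (g * h) x = act N n g (act N n h x) := by
  rintro (p | p | a)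
  · simp [act, mul_assoc]
  · simp [act, mul_assoc]
  · induction a using Quotient.inductionOn with
    | h p => simp [act, mul_assoc]

def rho : G →* Equiv.Perm (Pt N n) where
  toFun g :=
    ⟨act N n g, act N n g⁻¹,
      fun x => by rw [← act_mul, inv_mul_cancel, act_one],
      fun x => by rw [← act_mul, mul_inv_cancel, act_one]⟩
  map_one' := by ext x; exact act_one N n x
  map_mul' g h := by ext x; exact act_mul N n g h x

@[simp] theorem rho_apply (g : G) (x : Pt N n) : rho N n g x = act N n g x := rfl

theorem rho_j (ν : ↥N) (x : Src N n) :
    rho N n (↑ν) (j N n x) = j N n (Monoid.Coprod.inl ν * x) := by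
  have key : (⟦((ν : G) * 1, x)⟧ : APt N n) = ⟦((1 : G), Monoid.Coprod.inl ν * x)⟧ := by
    refine Quotient.sound ⟨ν⁻¹, ?_, ?_⟩
    · push_cast; group
    · simp
  show (Sum.inr (Sum.inr (⟦((ν : G) * 1, x)⟧ : APt N n)) : Pt N n) = _
  rw [key]
  rfl

/-! ### The explicit permutations -/

theorem injB1 (a : G) : Injective (fun x : Src N n => (Sum.inl (a, x) : Pt N n)) :=
  fun x y h => by simpa using h

theorem injB2 (a : G) : Injective (fun x : Src N n => (Sum.inr (Sum.inl (a, x)) : Pt N n)) :=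
  fun x y h => by simpa using h

theorem injJmul (i : Fin n) :
    Injective (fun x : Src N n => j N n (Monoid.Coprod.inr (FreeGroup.of i) * x)) :=
  fun x y h => mul_left_cancel (j_injective N n h)

noncomputable def Zp : Equiv.Perm (Pt N n) :=
  swapPerm (j_injective N n) (injB1 N n 1) (by intro b b'; simp [j])

noncomputable def sb (c : ↥N) : Equiv.Perm (Pt N n) :=
  swapPerm (injB2 N n 1) (injB1 N n ((c : G))⁻¹) (by intro b b'; simp)

noncomputable def sa (c : ↥N) (i : Fin n) : Equiv.Perm (Pt N n) :=
  swapPerm (injB2 N n (c : G)) (injJmul N n i) (by intro b b'; simp [j])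

noncomputable def Yp (c : ↥N) (i : Fin n) : Equiv.Perm (Pt N n) := sa N n c i * sb N n c

variable {c : ↥N} {i : Fin n}

theorem Zp_inv : (Zp N n)⁻¹ = Zp N n := swapPerm_inv _ _ _

theorem Zp_left (x : Src N n) : Zp N n (j N n x) = Sum.inl ((1 : G), x) :=
  swapPerm_left _ _ _ x

theorem Zp_fix (hc : (c : G) ≠ 1) (x : Src N n) :
    Zp N n (Sum.inl (((c : G))⁻¹, x)) = Sum.inl (((c : G))⁻¹, x) := by
  refine swapPerm_fixed _ _ _ ?_ ?_
  · intro b; simp [j]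
  · intro b h
    simp only [Sum.inl.injEq, Prod.mk.injEq] at h
    exact hc (by rw [← inv_inv (c : G), ← h.1, inv_one])

theorem sa_fix_B1 (p : G × Src N n) : sa N n c i (Sum.inl p) = Sum.inl p := by
  refine swapPerm_fixed _ _ _ ?_ ?_
  · intro b; simp
  · intro b; simp [j]

theorem sb_right (x : Src N n) :
    sb N n c (Sum.inl (((c : G))⁻¹, x)) = Sum.inr (Sum.inl ((1 : G), x)) :=
  swapPerm_right _ _ _ x

theorem sb_fix_B2c (hc : (c : G) ≠ 1) (x : Src N n) :
    sb N n c (Sum.inr (Sum.inl ((c : G), x))) = Sum.inr (Sum.inl ((c : G), x)) := by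
  refine swapPerm_fixed _ _ _ ?_ ?_
  · intro b h
    simp only [Sum.inr.injEq, Sum.inl.injEq, Prod.mk.injEq] at h
    exact hc h.1.symm
  · intro b; simp

theorem sa_left (x : Src N n) :
    sa N n c i (Sum.inr (Sum.inl ((c : G), x))) = j N n (Monoid.Coprod.inr (FreeGroup.of i) * x) :=
  swapPerm_left _ _ _ x

theorem sb_inv : (sb N n c)⁻¹ = sb N n c := swapPerm_inv _ _ _
theorem sa_inv : (sa N n c i)⁻¹ = sa N n c i := swapPerm_inv _ _ _

theorem Yp_inv : (Yp N n c i)⁻¹ = sb N n c * sa N n c i := by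
  show (sa N n c i * sb N n c)⁻¹ = _
  rw [mul_inv_rev, sb_inv, sa_inv]

theorem rho_inv_B1 (g : G) (p : G × Src N n) :
    (rho N n g)⁻¹ (Sum.inl p) = Sum.inl (g⁻¹ * p.1, p.2) := by
  rw [← map_inv]; rfl

theorem rho_B2 (g : G) (p : G × Src N n) :
    rho N n g (Sum.inr (Sum.inl p)) = Sum.inr (Sum.inl (g * p.1, p.2)) := rfl

theorem conj_eval (hc : (c : G) ≠ 1) (i : Fin n) (x : Src N n) :
    (Yp N n c i * rho N n (c : G) * (Yp N n c i)⁻¹ *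
      (Zp N n * (rho N n (c : G))⁻¹ * (Zp N n)⁻¹)) (j N n x) =
      j N n (Monoid.Coprod.inr (FreeGroup.of i) * x) := by
  simp only [Equiv.Perm.mul_apply]
  rw [Zp_inv, Zp_left, rho_inv_B1]
  simp only [mul_one]
  rw [Zp_fix N n hc, Yp_inv, Equiv.Perm.mul_apply, sa_fix_B1, sb_right, rho_B2]
  simp only [mul_one]
  show (sa N n c i * sb N n c) _ = _
  rw [Equiv.Perm.mul_apply, sb_fix_B2c N n hc, sa_left]

end Main

section Homs

variable {G : Type*} [Group G] (N : Subgroup G) (n : ℕ)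

/-- The substitution word for the `i`-th generator:
`y_i c y_i⁻¹ z_i c⁻¹ z_i⁻¹` in `G * F_{n+n}`. -/
def tWord (c : ↥N) (i : Fin n) : Monoid.Coprod G (FreeGroup (Fin (n + n))) :=
  Monoid.Coprod.inr (FreeGroup.of (Fin.castAdd n i)) * Monoid.Coprod.inl (c : G) *
    (Monoid.Coprod.inr (FreeGroup.of (Fin.castAdd n i)))⁻¹ *
    (Monoid.Coprod.inr (FreeGroup.of (Fin.natAdd n i)) * Monoid.Coprod.inl ((c : G))⁻¹ *
      (Monoid.Coprod.inr (FreeGroup.of (Fin.natAdd n i)))⁻¹)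

/-- The push-forward `N * F_n →* G * F_{n+n}`. -/
def Phi (c : ↥N) : Src N n →* Monoid.Coprod G (FreeGroup (Fin (n + n))) :=
  Monoid.Coprod.lift (Monoid.Coprod.inl.comp N.subtype) (FreeGroup.lift (tWord N n c))

noncomputable def perms (c : ↥N) : Fin (n + n) → Equiv.Perm (Pt N n) := fun k =>
  Sum.elim (fun i => Yp N n c i) (fun _ => Zp N n) (finSumFinEquiv.symm k)

noncomputable def Psi (c : ↥N) : Monoid.Coprod G (FreeGroup (Fin (n + n))) →* Equiv.Perm (Pt N n) :=
  Monoid.Coprod.lift (rho N n) (FreeGroup.lift (perms N n c))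

theorem Psi_tWord (c : ↥N) (i : Fin n) :
    Psi N n c (tWord N n c i) =
      Yp N n c i * rho N n (c : G) * (Yp N n c i)⁻¹ *
        (Zp N n * (rho N n (c : G))⁻¹ * (Zp N n)⁻¹) := by
  simp only [Psi, tWord, perms, map_mul, map_inv, Monoid.Coprod.lift_apply_inl,
    Monoid.Coprod.lift_apply_inr, FreeGroup.lift_apply_of, finSumFinEquiv_symm_apply_castAdd,
    finSumFinEquiv_symm_apply_natAdd, Sum.elim_inl, Sum.elim_inr]

theorem equivar_inv (c : ↥N) {m : Src N n}
    (h : ∀ y, Psi N n c (Phi N n c m) (j N n y) = j N n (m * y)) (y : Src N n) :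
    Psi N n c (Phi N n c m⁻¹) (j N n y) = j N n (m⁻¹ * y) := by
  rw [map_inv, map_inv, Equiv.Perm.inv_def, Equiv.symm_apply_eq, h (m⁻¹ * y),
    mul_inv_cancel_left]

theorem equivar (c : ↥N) (hc : (c : G) ≠ 1) (w : Src N n) :
    ∀ x, Psi N n c (Phi N n c w) (j N n x) = j N n (w * x) := by
  induction w using Monoid.Coprod.induction_on with
  | inl ν =>
    intro x
    have h1 : Phi N n c (Monoid.Coprod.inl ν) = Monoid.Coprod.inl (ν : G) := by simp [Phi]
    have h2 : Psi N n c (Monoid.Coprod.inl (ν : G)) = rho N n (ν : G) := by simp [Psi]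
    rw [h1, h2, rho_j]
  | inr u =>
    induction u using FreeGroup.induction_on with
    | C1 =>
      intro x
      simp
    | of i =>
      intro x
      have h1 : Phi N n c (Monoid.Coprod.inr (FreeGroup.of i)) = tWord N n c i := by
        simp [Phi]
      show Psi N n c (Phi N n c (Monoid.Coprod.inr (FreeGroup.of i))) (j N n x) =
        j N n (Monoid.Coprod.inr (FreeGroup.of i) * x)
      rw [h1, Psi_tWord]
      exact conj_eval N n hc i x
    | inv_of i ih =>
      intro x
      have key := equivar_inv N n c (m := Monoid.Coprod.inr (FreeGroup.of i)) ih x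
      rw [← map_inv] at key
      exact key
    | mul u v ihu ihv =>
      intro x
      rw [map_mul, map_mul, map_mul, Equiv.Perm.mul_apply, ihv, ihu, mul_assoc]
  | mul a b iha ihb =>
    intro x
    rw [map_mul, map_mul, Equiv.Perm.mul_apply, ihb, iha, mul_assoc]

theorem injective_at (c : ↥N) (hc : (c : G) ≠ 1) (w : Src N n)
    (hw : Phi N n c w = 1) : w = 1 := by
  have h := equivar N n c hc w 1
  rw [hw, map_one, mul_one] at h
  exact j_injective N n (by simpa using h.symm)

theorem mixed_identity_push (hN : N.Normal) (c : ↥N) (w : Src N n)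
    (hw : SatisfiesMixedIdentity (↥N) w) : SatisfiesMixedIdentity G (Phi N n c w) := by
  intro g
  have memN : ∀ i : Fin n,
      g (Fin.castAdd n i) * (c : G) * (g (Fin.castAdd n i))⁻¹ *
        (g (Fin.natAdd n i) * ((c : G))⁻¹ * (g (Fin.natAdd n i))⁻¹) ∈ N := fun i =>
    mul_mem (hN.conj_mem _ c.2 _) (hN.conj_mem _ (N.inv_mem c.2) _)
  set hfun : Fin n → ↥N := fun i =>
    ⟨g (Fin.castAdd n i) * (c : G) * (g (Fin.castAdd n i))⁻¹ *
        (g (Fin.natAdd n i) * ((c : G))⁻¹ * (g (Fin.natAdd n i))⁻¹), memN i⟩ with hfun_def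
  have key : (Monoid.Coprod.lift (MonoidHom.id G) (FreeGroup.lift g)).comp (Phi N n c) =
      N.subtype.comp (Monoid.Coprod.lift (MonoidHom.id (↥N)) (FreeGroup.lift hfun)) := by
    refine Monoid.Coprod.hom_ext ?_ ?_
    · ext ν
      simp [Phi]
    · refine FreeGroup.ext_hom _ _ fun i => ?_
      simp [Phi, tWord, hfun_def, mul_assoc]
  have : Monoid.Coprod.lift (MonoidHom.id G) (FreeGroup.lift g) (Phi N n c w) =
      N.subtype (Monoid.Coprod.lift (MonoidHom.id (↥N)) (FreeGroup.lift hfun) w) := by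
    have := congrArg (fun f : Src N n →* G => f w) key
    simpa using this
  rw [this, hw hfun, map_one]

end Homs

end MIFAux

/-- Every nontrivial normal subgroup of a MIF group is itself MIF. -/
theorem mif_of_normal_subgroup (G : Type*) [Group G] (hmif : IsMIF G)
    (N : Subgroup G) (hN : N.Normal) (hNnt : N ≠ ⊥) : IsMIF N := by
  intro n w hw
  obtain ⟨c, hc0⟩ := Subgroup.ne_bot_iff_exists_ne_one.mp hNnt
  have hc : (c : G) ≠ 1 := by
    simpa using hc0
  have h1 : MIFAux.Phi N n c w = 1 :=
    hmif (n + n) _ (MIFAux.mixed_identity_push N n hN c w hw)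
  exact MIFAux.injective_at N n c hc w h1
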